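/- arXiv:1206.0240 — 2 statements merged into one kernel-verified Lean document; each statement's English description precedes it below -/
import Mathlib

section
/- For C_n (n ≥ 2) and k ∈ ℕ, the number of tuples (u_0,…,u_n) of nonnegative integers with u_1,…,u_{n−1} ≥ 1 and u_0 + 2u_1 + ⋯ + 2u_{n−1} + u_n = 2k equals C(k+1, n) + C(k, n), and with the same constraints summing to 2k+1 it equals 2·C(k+1, n). -/
namespace CountFsCn
open Finset

lemma hs (n : ℕ) : ∀ s : ℕ, ∑ j ∈ range (s+1), (j + n).choose n = (s + n + 1).choose (n+1) := by
  intro s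
  induction s with
  | zero => simp
  | succ s ih =>
    rw [Finset.sum_range_succ, ih, show s + 1 + n + 1 = (s + n + 1) + 1 by omega,
      Nat.choose_succ_succ' (s + n + 1) n, show s + 1 + n = s + n + 1 by omega]
    omega

def A (n s : ℕ) : Finset (Fin n → ℕ) :=
  (Fintype.piFinset fun _ => range (s+1)).filter (fun v => ∑ i, v i ≤ s)

lemma mem_A {n s : ℕ} {v : Fin n → ℕ} : v ∈ A n s ↔ ∑ i, v i ≤ s := by
  simp only [A, Finset.mem_filter, Fintype.mem_piFinset, Finset.mem_range]
  constructor
  · exact fun h => h.2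
  · intro h
    refine ⟨fun i => ?_, h⟩
    have : v i ≤ ∑ j, v j := Finset.single_le_sum (fun j _ => Nat.zero_le _) (Finset.mem_univ i)
    omega

lemma card_A : ∀ n s : ℕ, (A n s).card = (s + n).choose n := by
  intro n
  induction n with
  | zero =>
    intro s
    rw [Nat.choose_zero_right, Finset.card_eq_one]
    refine ⟨fun i => i.elim0, ?_⟩
    ext v
    simp only [mem_A, Finset.mem_singleton]
    constructor
    · intro _; funext i; exact i.elim0
    · intro h; subst h; simp
  | succ n ih =>
    intro s
    rw [Finset.card_eq_sum_card_fiberwise (f := fun v => v 0) (t := range (s+1))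
      (fun v hv => by
        rw [Finset.mem_coe, mem_A] at hv
        have : v 0 ≤ ∑ j, v j := Finset.single_le_sum (fun j _ => Nat.zero_le _) (Finset.mem_univ 0)
        simp only [Finset.mem_coe, Finset.mem_range]; omega)]
    have fib : ∀ j ∈ range (s+1),
        ((A (n+1) s).filter (fun v => v 0 = j)).card = (A n (s - j)).card := by
      intro j hj
      simp only [Finset.mem_range] at hj
      refine Finset.card_nbij' (i := fun v => Fin.tail v) (j := fun w => Fin.cons j w)
        ?_ ?_ ?_ ?_
      · intro v hv
        simp only [Finset.mem_coe, Finset.mem_filter, mem_A] at hv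
        rw [Finset.mem_coe, mem_A]
        have := Fin.sum_univ_succ v
        simp only [Fin.tail]
        omega
      · intro w hw
        rw [Finset.mem_coe, mem_A] at hw
        simp only [Finset.mem_coe, Finset.mem_filter, mem_A, Fin.sum_univ_succ, Fin.cons_zero, Fin.cons_succ]
        exact ⟨by omega, trivial⟩
      · intro v hv
        simp only [Finset.mem_coe, Finset.mem_filter] at hv
        rw [← hv.2]
        exact Fin.cons_self_tail v
      · intro w _
        simp [Fin.tail_cons]
    rw [Finset.sum_congr rfl fib, Finset.sum_congr rfl (fun j _ => ih (s - j))]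
    have hrefl := Finset.sum_range_reflect (fun j => (j + n).choose n) (s+1)
    have : ∀ j ∈ range (s+1), (s - j + n).choose n = (s + 1 - 1 - j + n).choose n := by
      intro j hj; simp only [Finset.mem_range] at hj; congr 2
    rw [Finset.sum_congr rfl this, hrefl, hs, show s + (n+1) = s + n + 1 by omega]

lemma wsum_eq {n : ℕ} [NeZero n] (u : Fin (n+1) → ℕ) :
    ∑ i : Fin (n+1), (if (i : ℕ) = 0 ∨ (i : ℕ) = n then 1 else 2) * u i
      = u 0 + 2 * (∑ i ∈ (univ : Finset (Fin n)).erase 0, u i.castSucc) + u (Fin.last n) := by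
  rw [Fin.sum_univ_castSucc]
  have h0 : (0 : Fin n).castSucc = (0 : Fin (n+1)) := by ext; simp
  have hlast : (if ((Fin.last n : Fin (n+1)) : ℕ) = 0 ∨ ((Fin.last n : Fin (n+1)) : ℕ) = n
      then 1 else 2) * u (Fin.last n) = u (Fin.last n) := by
    simp [Fin.val_last]
  rw [hlast]
  congr 1
  rw [← Finset.add_sum_erase _ _ (Finset.mem_univ (0 : Fin n)), h0]
  have : (if ((0 : Fin (n+1)) : ℕ) = 0 ∨ ((0 : Fin (n+1)) : ℕ) = n then 1 else 2) * u 0 = u 0 := by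
    simp
  rw [this, Finset.mul_sum]
  congr 1
  apply Finset.sum_congr rfl
  intro i hi
  have hi0 : i ≠ 0 := (Finset.mem_erase.mp hi).1
  have : ¬(((i.castSucc : Fin (n+1)) : ℕ) = 0 ∨ ((i.castSucc : Fin (n+1)) : ℕ) = n) := by
    simp only [Fin.coe_castSucc]
    push_neg
    constructor
    · exact fun h => hi0 (Fin.ext h)
    · exact Nat.ne_of_lt i.isLt
  rw [if_neg this]

lemma pos_iff {n : ℕ} [NeZero n] (u : Fin (n+1) → ℕ) :
    (∀ i : Fin (n+1), 1 ≤ (i : ℕ) → (i : ℕ) ≤ n - 1 → 1 ≤ u i)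
      ↔ ∀ i ∈ (univ : Finset (Fin n)).erase 0, 1 ≤ u i.castSucc := by
  have hn : 1 ≤ n := Nat.one_le_iff_ne_zero.mpr (NeZero.ne n)
  constructor
  · intro h i hi
    have hi0 : i ≠ 0 := (Finset.mem_erase.mp hi).1
    have h1 : 1 ≤ ((i.castSucc : Fin (n+1)) : ℕ) := by
      simp only [Fin.coe_castSucc]
      rcases Nat.eq_zero_or_pos (i : ℕ) with h | h
      · exact absurd (Fin.ext h) hi0
      · exact h
    exact h _ h1 (by simp only [Fin.coe_castSucc]; have := i.isLt; omega)
  · intro h i h1 h2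
    have hlt : (i : ℕ) < n := by have := i.isLt; omega
    have : i = (⟨(i : ℕ), hlt⟩ : Fin n).castSucc := by ext; simp
    rw [this]
    exact h _ (Finset.mem_erase.mpr ⟨by
      intro hc
      have : ((⟨(i : ℕ), hlt⟩ : Fin n) : ℕ) = 0 := by rw [hc]; simp
      simp at this; subst this; simp at h1, Finset.mem_univ _⟩)
def B (n c t : ℕ) : Finset (Fin n → ℕ) :=
  (Fintype.piFinset fun _ => range (t+1)).filter (fun v => (∑ i, v i) + c ≤ t)

lemma mem_B {n c t : ℕ} {v : Fin n → ℕ} : v ∈ B n c t ↔ (∑ i, v i) + c ≤ t := by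
  simp only [B, Finset.mem_filter, Fintype.mem_piFinset, Finset.mem_range]
  constructor
  · exact fun h => h.2
  · intro h
    refine ⟨fun i => ?_, h⟩
    have : v i ≤ ∑ j, v j := Finset.single_le_sum (fun j _ => Nat.zero_le _) (Finset.mem_univ i)
    omega

def SF (n N : ℕ) : Finset (Fin (n+1) → ℕ) :=
  (Fintype.piFinset fun _ => range (N+1)).filter (fun u =>
    (∀ i : Fin (n+1), 1 ≤ (i : ℕ) → (i : ℕ) ≤ n - 1 → 1 ≤ u i) ∧
    (∑ i : Fin (n+1), (if (i : ℕ) = 0 ∨ (i : ℕ) = n then 1 else 2) * u i) = N)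

def Fm (n : ℕ) (u : Fin (n+1) → ℕ) (i : Fin n) : ℕ :=
  if (i : ℕ) = 0 then u 0 / 2 else u i.castSucc - 1

def Gm (n N ε : ℕ) [NeZero n] (v : Fin n → ℕ) (j : Fin (n+1)) : ℕ :=
  if (j : ℕ) = 0 then 2 * v 0 + ε
  else if h2 : (j : ℕ) = n then N - (2 * (∑ i, v i) + 2 * (n-1) + ε)
  else v ⟨(j : ℕ), by have := j.isLt; omega⟩ + 1

section
variable {n N ε : ℕ}

lemma hG0 [NeZero n] (v : Fin n → ℕ) : Gm n N ε v 0 = 2 * v 0 + ε := by simp [Gm]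

lemma hGlast [NeZero n] (v : Fin n → ℕ) :
    Gm n N ε v (Fin.last n) = N - (2 * (∑ i, v i) + 2 * (n-1) + ε) := by
  have h : (Fin.last n : ℕ) = n := Fin.val_last n
  rw [Gm, if_neg (by rw [h]; exact NeZero.ne n), dif_pos h]

lemma hGmid [NeZero n] (v : Fin n → ℕ) (i : Fin n) (hi : i ≠ 0) :
    Gm n N ε v i.castSucc = v i + 1 := by
  have hi' : (i : ℕ) ≠ 0 := by intro h; exact hi (Fin.ext (by simp [h]))
  have hi0 : ((i.castSucc : Fin (n+1)) : ℕ) ≠ 0 := by simpa using hi'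
  have hin : ((i.castSucc : Fin (n+1)) : ℕ) ≠ n := by
    simp only [Fin.coe_castSucc]; exact Nat.ne_of_lt i.isLt
  rw [Gm, if_neg hi0, dif_neg hin]
  congr 2

lemma hF0 [NeZero n] (u : Fin (n+1) → ℕ) : Fm n u 0 = u 0 / 2 := by simp [Fm]

lemma hFmid [NeZero n] (u : Fin (n+1) → ℕ) (i : Fin n) (hi : i ≠ 0) :
    Fm n u i = u i.castSucc - 1 := by
  have hi' : (i : ℕ) ≠ 0 := by intro h; exact hi (Fin.ext (by simp [h]))
  rw [Fm, if_neg hi']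

lemma sum_dec [NeZero n] (v : Fin n → ℕ) :
    ∑ i, v i = v 0 + ∑ i ∈ (univ : Finset (Fin n)).erase 0, v i :=
  (Finset.add_sum_erase _ _ (Finset.mem_univ _)).symm

lemma card_erase0 [NeZero n] : ((univ : Finset (Fin n)).erase 0).card = n - 1 := by
  rw [Finset.card_erase_of_mem (Finset.mem_univ _), Finset.card_univ, Fintype.card_fin]

lemma sum_add_one [NeZero n] (f : Fin n → ℕ) :
    ∑ i ∈ (univ : Finset (Fin n)).erase 0, (f i + 1)
      = (∑ i ∈ (univ : Finset (Fin n)).erase 0, f i) + (n - 1) := by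
  rw [Finset.sum_add_distrib, Finset.sum_const, smul_eq_mul, mul_one, card_erase0]

lemma sum_sub_one [NeZero n] (f : Fin n → ℕ)
    (hpos : ∀ i ∈ (univ : Finset (Fin n)).erase 0, 1 ≤ f i) :
    (∑ i ∈ (univ : Finset (Fin n)).erase 0, (f i - 1)) + (n - 1)
      = ∑ i ∈ (univ : Finset (Fin n)).erase 0, f i := by
  rw [← sum_add_one]
  refine Finset.sum_congr rfl fun i hi => ?_
  have := hpos i hi
  omega

lemma card_part (n N ε : ℕ) (hn : 2 ≤ n) (hε : ε ≤ 1) :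
    ((SF n N).filter (fun u => u 0 % 2 = ε)).card = (B n (n - 1 + ε) ((N + ε)/2)).card := by
  haveI : NeZero n := ⟨by omega⟩
  refine Finset.card_nbij' (i := Fm n) (j := Gm n N ε) ?_ ?_ ?_ ?_
  · intro u hu
    simp only [Finset.mem_coe, Finset.mem_filter, SF, Fintype.mem_piFinset] at hu
    obtain ⟨⟨_, hpos, hsum⟩, hmod⟩ := hu
    rw [wsum_eq] at hsum
    rw [Finset.mem_coe, mem_B, sum_dec (Fm n u), hF0,
      Finset.sum_congr rfl (fun i hi => hFmid u i (Finset.mem_erase.mp hi).1)]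
    have hsub : (∑ i ∈ (univ : Finset (Fin n)).erase 0, (u i.castSucc - 1)) + (n - 1)
        = ∑ i ∈ (univ : Finset (Fin n)).erase 0, u i.castSucc :=
      sum_sub_one (fun i => u i.castSucc) ((pos_iff u).mp hpos)
    omega
  · intro v hv
    rw [Finset.mem_coe, mem_B] at hv
    have h2 : 2 * (∑ i, v i) + 2 * (n-1) + ε ≤ N := by omega
    simp only [Finset.mem_coe, Finset.mem_filter, SF, Fintype.mem_piFinset, Finset.mem_range]
    refine ⟨⟨fun j => ?_, ?_, ?_⟩, ?_⟩
    · by_cases hj0 : (j : ℕ) = 0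
      · rw [Gm, if_pos hj0]
        have : v 0 ≤ ∑ i, v i :=
          Finset.single_le_sum (fun i _ => Nat.zero_le _) (Finset.mem_univ _)
        omega
      · by_cases hjn : (j : ℕ) = n
        · rw [Gm, if_neg hj0, dif_pos hjn]; omega
        · rw [Gm, if_neg hj0, dif_neg hjn]
          have : v ⟨(j : ℕ), by have := j.isLt; omega⟩ ≤ ∑ i, v i :=
            Finset.single_le_sum (fun i _ => Nat.zero_le _) (Finset.mem_univ _)
          omega
    · rw [pos_iff]
      intro i hi
      rw [hGmid v i (Finset.mem_erase.mp hi).1]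
      omega
    · rw [wsum_eq, hG0, hGlast,
        Finset.sum_congr rfl (fun i hi => hGmid v i (Finset.mem_erase.mp hi).1),
        sum_add_one]
      have hd := sum_dec v
      omega
    · rw [hG0]; omega
  · intro u hu
    simp only [Finset.mem_coe, Finset.mem_filter, SF, Fintype.mem_piFinset] at hu
    obtain ⟨⟨_, hpos, hsum⟩, hmod⟩ := hu
    rw [wsum_eq] at hsum
    funext j
    by_cases hj0 : (j : ℕ) = 0
    · have : j = 0 := Fin.ext hj0
      subst this
      rw [hG0, hF0]
      omega
    · by_cases hjn : (j : ℕ) = n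
      · have : j = Fin.last n := Fin.ext (by rw [hjn, Fin.val_last])
        subst this
        rw [hGlast, sum_dec (Fm n u), hF0,
          Finset.sum_congr rfl (fun i hi => hFmid u i (Finset.mem_erase.mp hi).1)]
        have hsub : (∑ i ∈ (univ : Finset (Fin n)).erase 0, (u i.castSucc - 1)) + (n - 1)
            = ∑ i ∈ (univ : Finset (Fin n)).erase 0, u i.castSucc :=
          sum_sub_one (fun i => u i.castSucc) ((pos_iff u).mp hpos)
        omega
      · have hlt : (j : ℕ) < n := by have := j.isLt; omega
        have hne : (⟨(j : ℕ), hlt⟩ : Fin n) ≠ 0 := by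
          intro h
          exact hj0 (by simpa using congrArg Fin.val h)
        have hcast : (⟨(j : ℕ), hlt⟩ : Fin n).castSucc = j := by ext; simp
        rw [Gm, if_neg hj0, dif_neg hjn, hFmid u _ hne, hcast]
        have := hpos j (by omega) (by omega)
        omega
  · intro v hv
    funext i
    by_cases hi0 : i = 0
    · subst hi0
      rw [hF0, hG0]
      omega
    · rw [hFmid _ i hi0, hGmid v i hi0]
      omega
end

lemma card_B {c t : ℕ} {n : ℕ} (hn : 1 ≤ n) : (B n c t).card = (t + n - c).choose n := by
  rcases le_or_gt c t with h | h
  · have hBA : B n c t = A n (t - c) := by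
      ext v
      rw [mem_B, mem_A]
      omega
    rw [hBA, card_A, show t - c + n = t + n - c by omega]
  · have hBe : B n c t = ∅ := by
      ext v
      simp only [mem_B, Finset.notMem_empty, iff_false]
      omega
    rw [hBe, Finset.card_empty, Nat.choose_eq_zero_of_lt (by omega)]


end CountFsCn

open CountFsCn in
/-- For `C_n` (`n ≥ 2`), the number of tuples `(u_0,…,u_n)` of nonnegative
integers with `u_1,…,u_{n-1} ≥ 1` and `u_0 + 2u_1 + ⋯ + 2u_{n-1} + u_n = 2k` equals
`C(k+1,n) + C(k,n)`, and with the same constraints summing to `2k+1` it equals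
`2·C(k+1,n)`. -/
theorem count_Fs_Cn (n k : ℕ) (hn : 2 ≤ n) :
    Set.ncard {u : Fin (n + 1) → ℕ |
        (∀ i : Fin (n + 1), 1 ≤ (i : ℕ) → (i : ℕ) ≤ n - 1 → 1 ≤ u i) ∧
        (∑ i : Fin (n + 1), (if (i : ℕ) = 0 ∨ (i : ℕ) = n then 1 else 2) * u i) = 2 * k} =
      (k + 1).choose n + k.choose n ∧
    Set.ncard {u : Fin (n + 1) → ℕ |
        (∀ i : Fin (n + 1), 1 ≤ (i : ℕ) → (i : ℕ) ≤ n - 1 → 1 ≤ u i) ∧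
        (∑ i : Fin (n + 1), (if (i : ℕ) = 0 ∨ (i : ℕ) = n then 1 else 2) * u i) = 2 * k + 1} =
      2 * (k + 1).choose n := by
  haveI : NeZero n := ⟨by omega⟩
  have key : ∀ N : ℕ,
      Set.ncard {u : Fin (n + 1) → ℕ |
        (∀ i : Fin (n + 1), 1 ≤ (i : ℕ) → (i : ℕ) ≤ n - 1 → 1 ≤ u i) ∧
        (∑ i : Fin (n + 1), (if (i : ℕ) = 0 ∨ (i : ℕ) = n then 1 else 2) * u i) = N}
      = ((N + 0)/2 + n - (n - 1 + 0)).choose n + ((N + 1)/2 + n - (n - 1 + 1)).choose n := by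
    intro N
    have hset : {u : Fin (n + 1) → ℕ |
        (∀ i : Fin (n + 1), 1 ≤ (i : ℕ) → (i : ℕ) ≤ n - 1 → 1 ≤ u i) ∧
        (∑ i : Fin (n + 1), (if (i : ℕ) = 0 ∨ (i : ℕ) = n then 1 else 2) * u i) = N}
        = ↑(SF n N) := by
      ext u
      simp only [SF, Set.mem_setOf_eq, Finset.mem_coe, Finset.mem_filter,
        Fintype.mem_piFinset, Finset.mem_range]
      constructor
      · intro h
        refine ⟨fun i => ?_, h⟩
        have h1 : (if (i : ℕ) = 0 ∨ (i : ℕ) = n then 1 else 2) * u i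
            ≤ ∑ j : Fin (n+1), (if (j : ℕ) = 0 ∨ (j : ℕ) = n then 1 else 2) * u j :=
          Finset.single_le_sum
            (f := fun j : Fin (n+1) => (if (j : ℕ) = 0 ∨ (j : ℕ) = n then 1 else 2) * u j)
            (fun j _ => Nat.zero_le _) (Finset.mem_univ i)
        rw [h.2] at h1
        split at h1 <;> omega
      · exact fun h => h.2
    rw [hset, Set.ncard_coe_finset,
      ← Finset.card_filter_add_card_filter_not (s := SF n N)
        (p := fun u => u 0 % 2 = 0)]
    have hneg : (SF n N).filter (fun u => ¬ u 0 % 2 = 0)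
        = (SF n N).filter (fun u => u 0 % 2 = 1) := by
      apply Finset.filter_congr
      intro u _
      omega
    rw [hneg, card_part n N 0 hn (by omega), card_part n N 1 hn (by omega),
      card_B (by omega), card_B (by omega)]
  constructor
  · rw [key (2 * k), show (2*k + 0)/2 + n - (n - 1 + 0) = k + 1 by omega,
      show (2*k + 1)/2 + n - (n - 1 + 1) = k by omega]
  · rw [key (2 * k + 1), show (2*k + 1 + 0)/2 + n - (n - 1 + 0) = k + 1 by omega,
      show (2*k + 1 + 1)/2 + n - (n - 1 + 1) = k + 1 by omega]
    omega
end

section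
/- For C_n (n ≥ 2) and k ∈ ℕ, the number of tuples (u_0,…,u_n) of nonnegative integers with u_0 ≥ 1, u_n ≥ 1 and u_0 + 2u_1 + ⋯ + 2u_{n−1} + u_n = 2k equals C(n+k−1, n) + C(n+k−2, n), and with sum 2k+1 it equals 2·C(n+k−1, n). -/
noncomputable def tupleSymEquiv (r m : ℕ) :
    ↥{v : Fin r → ℕ | ∑ i, v i = m} ≃ Sym (Fin r) m where
  toFun v := ⟨∑ i, (v.1 i) • ({i} : Multiset (Fin r)), by
    rw [Multiset.card_sum]
    simp only [Multiset.card_nsmul, Multiset.card_singleton, mul_one]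
    exact v.2⟩
  invFun s := ⟨fun i => s.1.count i, by
    show ∑ i, _ = m
    rw [Multiset.sum_count_eq_card (fun a _ => Finset.mem_univ a), s.2]⟩
  left_inv v := by
    ext i
    simp [Multiset.count_sum', Multiset.count_singleton, Finset.sum_ite_eq]
  right_inv s := by
    obtain ⟨ms, hms⟩ := s
    ext : 1
    show ∑ i, Multiset.count i ms • {i} = ms
    conv_rhs => rw [← Multiset.toFinset_sum_count_nsmul_eq ms]
    refine (Finset.sum_subset (Finset.subset_univ _) ?_).symm
    intro x _ hx
    simp_all [Multiset.count_eq_zero]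

lemma ncard_sum_tuples (r m : ℕ) :
    Set.ncard {v : Fin r → ℕ | ∑ i, v i = m} = (r + m - 1).choose m := by
  rw [← Nat.card_coe_set_eq, Nat.card_congr (tupleSymEquiv r m),
    Nat.card_eq_fintype_card, Sym.card_sym_eq_choose, Fintype.card_fin]

lemma val_eq_zero_iff' {n : ℕ} (i : Fin (n+1)) : (i:ℕ) = 0 ↔ i = 0 := by
  rw [Fin.ext_iff]; simp

lemma val_eq_last_iff' {n : ℕ} (i : Fin (n+1)) : (i:ℕ) = n ↔ i = Fin.last n := by
  rw [Fin.ext_iff]; simp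

lemma sum_endpoint {n : ℕ} (hn : 1 ≤ n) (f : Fin (n+1) → ℕ) :
    ∑ i : Fin (n+1), (if (i:ℕ) = 0 ∨ (i:ℕ) = n then f i else 0)
      = f 0 + f (Fin.last n) := by
  have key : ∀ i : Fin (n+1), (if (i:ℕ) = 0 ∨ (i:ℕ) = n then f i else 0)
      = (if i = 0 then f i else 0) + (if i = Fin.last n then f i else 0) := by
    intro i
    by_cases h0 : (i:ℕ) = 0
    · have hl : ¬ (i:ℕ) = n := by omega
      rw [if_pos (Or.inl h0), if_pos ((val_eq_zero_iff' i).1 h0),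
        if_neg (fun h => hl ((val_eq_last_iff' i).2 h)), add_zero]
    · by_cases hl : (i:ℕ) = n
      · rw [if_pos (Or.inr hl), if_neg (fun h => h0 ((val_eq_zero_iff' i).2 h)),
          if_pos ((val_eq_last_iff' i).1 hl), zero_add]
      · rw [if_neg (by tauto), if_neg (fun h => h0 ((val_eq_zero_iff' i).2 h)),
          if_neg (fun h => hl ((val_eq_last_iff' i).2 h)), add_zero]
  rw [Finset.sum_congr rfl fun i _ => key i, Finset.sum_add_distrib,
    Finset.sum_ite_eq' Finset.univ (0 : Fin (n+1)) f,
    Finset.sum_ite_eq' Finset.univ (Fin.last n) f]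
  simp

/-- the substitution map -/
def phiMap (n c0 c1 : ℕ) (v : Fin (n+1) → ℕ) : Fin (n+1) → ℕ :=
  fun i => if (i:ℕ) = 0 then 2 * v i + c0 else if (i:ℕ) = n then 2 * v i + c1 else v i

lemma phiMap_injective {n : ℕ} (hn : 2 ≤ n) (c0 c1 : ℕ) : Function.Injective (phiMap n c0 c1) := by
  intro v w h
  funext i
  have := congrFun h i
  unfold phiMap at this
  by_cases h0 : (i:ℕ) = 0 <;> by_cases hl : (i:ℕ) = n <;>
    simp [h0, hl, show ¬ n = 0 by omega] at this <;> omega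

lemma wsum_phi {n : ℕ} (hn : 2 ≤ n) (c0 c1 : ℕ) (v : Fin (n+1) → ℕ) :
    ∑ i : Fin (n+1), (if (i:ℕ) = 0 ∨ (i:ℕ) = n then 1 else 2) * phiMap n c0 c1 v i
      = 2 * (∑ i, v i) + (c0 + c1) := by
  have key : ∀ i : Fin (n+1),
      (if (i:ℕ) = 0 ∨ (i:ℕ) = n then 1 else 2) * phiMap n c0 c1 v i
        = 2 * v i + (if (i:ℕ) = 0 ∨ (i:ℕ) = n then (if (i:ℕ) = 0 then c0 else c1) else 0) := by
    intro i
    unfold phiMap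
    by_cases h0 : (i:ℕ) = 0
    · have hl : ¬ (i:ℕ) = n := by omega
      simp [h0, hl]
    · by_cases hl : (i:ℕ) = n <;> simp [h0, hl, show ¬ n = 0 by omega] <;> ring
  rw [Finset.sum_congr rfl fun i _ => key i, Finset.sum_add_distrib, ← Finset.mul_sum,
    sum_endpoint (by omega) (fun i => if (i:ℕ) = 0 then c0 else c1)]
  have h1 : ((0 : Fin (n+1)) : ℕ) = 0 := rfl
  have h2 : ((Fin.last n : Fin (n+1)) : ℕ) = n := Fin.val_last n
  rw [if_pos h1, if_neg (by omega : ¬ ((Fin.last n : Fin (n+1)) : ℕ) = 0)]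

lemma wsum_split {n : ℕ} (hn : 2 ≤ n) (u : Fin (n+1) → ℕ) :
    ∑ i : Fin (n+1), (if (i:ℕ) = 0 ∨ (i:ℕ) = n then 1 else 2) * u i
      = (u 0 + u (Fin.last n)) + 2 * ∑ i : Fin (n+1), (if (i:ℕ) = 0 ∨ (i:ℕ) = n then 0 else u i) := by
  have key : ∀ i : Fin (n+1),
      (if (i:ℕ) = 0 ∨ (i:ℕ) = n then 1 else 2) * u i
        = (if (i:ℕ) = 0 ∨ (i:ℕ) = n then u i else 0)
          + 2 * (if (i:ℕ) = 0 ∨ (i:ℕ) = n then 0 else u i) := by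
    intro i
    by_cases h : (i:ℕ) = 0 ∨ (i:ℕ) = n <;> simp only [h, if_true, if_false] <;> ring
  rw [Finset.sum_congr rfl fun i _ => key i, Finset.sum_add_distrib, ← Finset.mul_sum,
    sum_endpoint (by omega) u]

lemma class_eq_image {n : ℕ} (hn : 2 ≤ n) (c0 c1 m : ℕ) (hc0 : 1 ≤ c0) (hc02 : c0 ≤ 2)
    (hc1 : 1 ≤ c1) (hc12 : c1 ≤ 2) :
    {u : Fin (n+1) → ℕ | (1 ≤ u 0 ∧ 1 ≤ u (Fin.last n) ∧
        (∑ i : Fin (n+1), (if (i:ℕ) = 0 ∨ (i:ℕ) = n then 1 else 2) * u i) = 2 * m + c0 + c1)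
        ∧ u 0 % 2 = c0 % 2}
      = phiMap n c0 c1 '' {v : Fin (n+1) → ℕ | ∑ i, v i = m} := by
  have h0v : ((0 : Fin (n+1)) : ℕ) = 0 := rfl
  have hlv : ((Fin.last n : Fin (n+1)) : ℕ) = n := Fin.val_last n
  ext u
  constructor
  · rintro ⟨⟨h0, hl, hs⟩, hp⟩
    -- parity of u (last)
    have hsplit := wsum_split hn u
    rw [hs] at hsplit
    have hpl : u (Fin.last n) % 2 = c1 % 2 := by omega
    have hc0le : c0 ≤ u 0 := by omega
    have hc1le : c1 ≤ u (Fin.last n) := by omega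
    obtain ⟨v, hPhi⟩ : ∃ v, phiMap n c0 c1 v = u := by
      refine ⟨fun i => if (i:ℕ) = 0 then (u i - c0)/2 else if (i:ℕ) = n then (u i - c1)/2
        else u i, ?_⟩
      have key : ∀ x c : ℕ, c ≤ x → x % 2 = c % 2 → 2 * ((x - c) / 2) + c = x := by
        intro x c hxc hx2; omega
      funext i
      by_cases h0 : (i:ℕ) = 0
      · have hi : i = 0 := (val_eq_zero_iff' i).1 h0
        subst hi
        simp only [phiMap, if_pos h0]
        exact key _ _ hc0le hp
      · by_cases hl2 : (i:ℕ) = n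
        · have hi : i = Fin.last n := (val_eq_last_iff' i).1 hl2
          subst hi
          simp only [phiMap, if_neg h0, if_pos hl2]
          exact key _ _ hc1le hpl
        · simp [phiMap, h0, hl2]
    have hws := wsum_phi hn c0 c1 v
    rw [hPhi, hs] at hws
    have hvm : ∑ i, v i = m := by omega
    exact ⟨v, hvm, hPhi⟩
  · rintro ⟨v, hv, rfl⟩
    have e0 : phiMap n c0 c1 v 0 = 2 * v 0 + c0 := by simp [phiMap, h0v]
    have el : phiMap n c0 c1 v (Fin.last n) = 2 * v (Fin.last n) + c1 := by
      simp [phiMap, hlv, show ¬ n = 0 by omega]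
    refine ⟨⟨?_, ?_, ?_⟩, ?_⟩
    · rw [e0]; omega
    · rw [el]; omega
    · rw [wsum_phi hn, hv]; ring
    · rw [e0]; omega

lemma choose_flip (a b : ℕ) : (a + b).choose b = (a + b).choose a := by
  have := Nat.choose_symm (Nat.le_add_right a b)
  rwa [Nat.add_sub_cancel_left] at this

lemma sum_tuples_finite (r m : ℕ) : {v : Fin r → ℕ | ∑ i, v i = m}.Finite := by
  apply Set.Finite.subset (Set.Finite.pi fun _ : Fin r => Set.finite_Iic m)
  intro v hv i _
  simp only [Set.mem_Iic]
  exact hv ▸ Finset.single_le_sum (fun j _ => Nat.zero_le _) (Finset.mem_univ i)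

lemma class_finite {n : ℕ} (hn : 2 ≤ n) (c0 c1 m : ℕ) (hc0 : 1 ≤ c0) (hc02 : c0 ≤ 2)
    (hc1 : 1 ≤ c1) (hc12 : c1 ≤ 2) :
    {u : Fin (n+1) → ℕ | (1 ≤ u 0 ∧ 1 ≤ u (Fin.last n) ∧
        (∑ i : Fin (n+1), (if (i:ℕ) = 0 ∨ (i:ℕ) = n then 1 else 2) * u i) = 2 * m + c0 + c1)
        ∧ u 0 % 2 = c0 % 2}.Finite := by
  rw [class_eq_image hn c0 c1 m hc0 hc02 hc1 hc12]
  exact (sum_tuples_finite (n+1) m).image _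

lemma class_ncard {n : ℕ} (hn : 2 ≤ n) (c0 c1 m : ℕ) (hc0 : 1 ≤ c0) (hc02 : c0 ≤ 2)
    (hc1 : 1 ≤ c1) (hc12 : c1 ≤ 2) :
    Set.ncard {u : Fin (n+1) → ℕ | (1 ≤ u 0 ∧ 1 ≤ u (Fin.last n) ∧
        (∑ i : Fin (n+1), (if (i:ℕ) = 0 ∨ (i:ℕ) = n then 1 else 2) * u i) = 2 * m + c0 + c1)
        ∧ u 0 % 2 = c0 % 2} = (n + m).choose n := by
  rw [class_eq_image hn c0 c1 m hc0 hc02 hc1 hc12,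
    Set.ncard_image_of_injective _ (phiMap_injective hn c0 c1), ncard_sum_tuples]
  rw [show (n+1) + m - 1 = n + m by omega, choose_flip]

/-- For `C_n` (`n ≥ 2`), the number of tuples `(u_0,…,u_n)` of nonnegative
integers with `u_0 ≥ 1`, `u_n ≥ 1` and `u_0 + 2u_1 + ⋯ + 2u_{n-1} + u_n = 2k` equals
`C(n+k-1,n) + C(n+k-2,n)`, and with sum `2k+1` it equals `2·C(n+k-1,n)`. -/
theorem count_Fl_Cn (n k : ℕ) (hn : 2 ≤ n) :
    Set.ncard {u : Fin (n + 1) → ℕ |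
        1 ≤ u 0 ∧ 1 ≤ u (Fin.last n) ∧
        (∑ i : Fin (n + 1), (if (i : ℕ) = 0 ∨ (i : ℕ) = n then 1 else 2) * u i) = 2 * k} =
      (n + k - 1).choose n + (n + k - 2).choose n ∧
    Set.ncard {u : Fin (n + 1) → ℕ |
        1 ≤ u 0 ∧ 1 ≤ u (Fin.last n) ∧
        (∑ i : Fin (n + 1), (if (i : ℕ) = 0 ∨ (i : ℕ) = n then 1 else 2) * u i) = 2 * k + 1} =
      2 * (n + k - 1).choose n := by
  constructor
  · -- even case
    rcases Nat.lt_or_ge k 2 with hk | hk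
    · rcases (by omega : k = 0 ∨ k = 1) with rfl | rfl
      · -- k = 0 : empty set
        have he : {u : Fin (n + 1) → ℕ |
            1 ≤ u 0 ∧ 1 ≤ u (Fin.last n) ∧
            (∑ i : Fin (n + 1), (if (i : ℕ) = 0 ∨ (i : ℕ) = n then 1 else 2) * u i) = 2 * 0}
            = ∅ := by
          ext u
          simp only [Set.mem_setOf_eq, Set.mem_empty_iff_false, iff_false, not_and]
          intro h0 hl hs
          have := wsum_split hn u
          omega
        rw [he, Set.ncard_empty,
          Nat.choose_eq_zero_of_lt (show n + 0 - 1 < n by omega),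
          Nat.choose_eq_zero_of_lt (show n + 0 - 2 < n by omega)]
      · -- k = 1 : only the odd-odd class
        have he : {u : Fin (n + 1) → ℕ |
            1 ≤ u 0 ∧ 1 ≤ u (Fin.last n) ∧
            (∑ i : Fin (n + 1), (if (i : ℕ) = 0 ∨ (i : ℕ) = n then 1 else 2) * u i) = 2 * 1}
            = {u : Fin (n+1) → ℕ | (1 ≤ u 0 ∧ 1 ≤ u (Fin.last n) ∧
              (∑ i : Fin (n+1), (if (i:ℕ) = 0 ∨ (i:ℕ) = n then 1 else 2) * u i) = 2 * 0 + 1 + 1)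
              ∧ u 0 % 2 = 1 % 2} := by
          ext u
          simp only [Set.mem_setOf_eq]
          constructor
          · rintro ⟨h0, hl, hs⟩
            have := wsum_split hn u
            exact ⟨⟨h0, hl, by omega⟩, by omega⟩
          · rintro ⟨⟨h0, hl, hs⟩, -⟩
            exact ⟨h0, hl, by omega⟩
        rw [he, class_ncard hn 1 1 0 (by norm_num) (by norm_num) (by norm_num) (by norm_num),
          Nat.choose_eq_zero_of_lt (show n + 1 - 2 < n by omega),
          show n + 1 - 1 = n by omega, Nat.add_zero, Nat.choose_self]
    · -- k ≥ 2
      have hU : {u : Fin (n + 1) → ℕ |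
          1 ≤ u 0 ∧ 1 ≤ u (Fin.last n) ∧
          (∑ i : Fin (n + 1), (if (i : ℕ) = 0 ∨ (i : ℕ) = n then 1 else 2) * u i) = 2 * k}
          = {u : Fin (n+1) → ℕ | (1 ≤ u 0 ∧ 1 ≤ u (Fin.last n) ∧
              (∑ i : Fin (n+1), (if (i:ℕ) = 0 ∨ (i:ℕ) = n then 1 else 2) * u i)
                = 2 * (k-1) + 1 + 1) ∧ u 0 % 2 = 1 % 2}
            ∪ {u : Fin (n+1) → ℕ | (1 ≤ u 0 ∧ 1 ≤ u (Fin.last n) ∧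
              (∑ i : Fin (n+1), (if (i:ℕ) = 0 ∨ (i:ℕ) = n then 1 else 2) * u i)
                = 2 * (k-2) + 2 + 2) ∧ u 0 % 2 = 2 % 2} := by
        ext u
        simp only [Set.mem_setOf_eq, Set.mem_union]
        constructor
        · rintro ⟨h0, hl, hs⟩
          by_cases hpar : u 0 % 2 = 1
          · exact Or.inl ⟨⟨h0, hl, by omega⟩, by omega⟩
          · exact Or.inr ⟨⟨h0, hl, by omega⟩, by omega⟩
        · rintro (⟨⟨h0, hl, hs⟩, -⟩ | ⟨⟨h0, hl, hs⟩, -⟩) <;> exact ⟨h0, hl, by omega⟩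
      have hdisj : Disjoint
          {u : Fin (n+1) → ℕ | (1 ≤ u 0 ∧ 1 ≤ u (Fin.last n) ∧
              (∑ i : Fin (n+1), (if (i:ℕ) = 0 ∨ (i:ℕ) = n then 1 else 2) * u i)
                = 2 * (k-1) + 1 + 1) ∧ u 0 % 2 = 1 % 2}
          {u : Fin (n+1) → ℕ | (1 ≤ u 0 ∧ 1 ≤ u (Fin.last n) ∧
              (∑ i : Fin (n+1), (if (i:ℕ) = 0 ∨ (i:ℕ) = n then 1 else 2) * u i)
                = 2 * (k-2) + 2 + 2) ∧ u 0 % 2 = 2 % 2} := by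
        rw [Set.disjoint_left]
        rintro u ⟨-, h1⟩ ⟨-, h2⟩
        omega
      rw [hU, Set.ncard_union_eq hdisj
          (class_finite hn 1 1 (k-1) (by norm_num) (by norm_num) (by norm_num) (by norm_num))
          (class_finite hn 2 2 (k-2) (by norm_num) (by norm_num) (by norm_num) (by norm_num)),
        class_ncard hn 1 1 (k-1) (by norm_num) (by norm_num) (by norm_num) (by norm_num),
        class_ncard hn 2 2 (k-2) (by norm_num) (by norm_num) (by norm_num) (by norm_num),
        show n + (k-1) = n + k - 1 by omega, show n + (k-2) = n + k - 2 by omega]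
  · -- odd case
    rcases Nat.eq_zero_or_pos k with rfl | hk
    · have he : {u : Fin (n + 1) → ℕ |
          1 ≤ u 0 ∧ 1 ≤ u (Fin.last n) ∧
          (∑ i : Fin (n + 1), (if (i : ℕ) = 0 ∨ (i : ℕ) = n then 1 else 2) * u i) = 2 * 0 + 1}
          = ∅ := by
        ext u
        simp only [Set.mem_setOf_eq, Set.mem_empty_iff_false, iff_false, not_and]
        intro h0 hl hs
        have := wsum_split hn u
        omega
      rw [he, Set.ncard_empty, Nat.choose_eq_zero_of_lt (show n + 0 - 1 < n by omega), mul_zero]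
    · have hU : {u : Fin (n + 1) → ℕ |
          1 ≤ u 0 ∧ 1 ≤ u (Fin.last n) ∧
          (∑ i : Fin (n + 1), (if (i : ℕ) = 0 ∨ (i : ℕ) = n then 1 else 2) * u i) = 2 * k + 1}
          = {u : Fin (n+1) → ℕ | (1 ≤ u 0 ∧ 1 ≤ u (Fin.last n) ∧
              (∑ i : Fin (n+1), (if (i:ℕ) = 0 ∨ (i:ℕ) = n then 1 else 2) * u i)
                = 2 * (k-1) + 1 + 2) ∧ u 0 % 2 = 1 % 2}
            ∪ {u : Fin (n+1) → ℕ | (1 ≤ u 0 ∧ 1 ≤ u (Fin.last n) ∧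
              (∑ i : Fin (n+1), (if (i:ℕ) = 0 ∨ (i:ℕ) = n then 1 else 2) * u i)
                = 2 * (k-1) + 2 + 1) ∧ u 0 % 2 = 2 % 2} := by
        ext u
        simp only [Set.mem_setOf_eq, Set.mem_union]
        constructor
        · rintro ⟨h0, hl, hs⟩
          by_cases hpar : u 0 % 2 = 1
          · exact Or.inl ⟨⟨h0, hl, by omega⟩, by omega⟩
          · exact Or.inr ⟨⟨h0, hl, by omega⟩, by omega⟩
        · rintro (⟨⟨h0, hl, hs⟩, -⟩ | ⟨⟨h0, hl, hs⟩, -⟩) <;> exact ⟨h0, hl, by omega⟩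
      have hdisj : Disjoint
          {u : Fin (n+1) → ℕ | (1 ≤ u 0 ∧ 1 ≤ u (Fin.last n) ∧
              (∑ i : Fin (n+1), (if (i:ℕ) = 0 ∨ (i:ℕ) = n then 1 else 2) * u i)
                = 2 * (k-1) + 1 + 2) ∧ u 0 % 2 = 1 % 2}
          {u : Fin (n+1) → ℕ | (1 ≤ u 0 ∧ 1 ≤ u (Fin.last n) ∧
              (∑ i : Fin (n+1), (if (i:ℕ) = 0 ∨ (i:ℕ) = n then 1 else 2) * u i)
                = 2 * (k-1) + 2 + 1) ∧ u 0 % 2 = 2 % 2} := by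
        rw [Set.disjoint_left]
        rintro u ⟨-, h1⟩ ⟨-, h2⟩
        omega
      rw [hU, Set.ncard_union_eq hdisj
          (class_finite hn 1 2 (k-1) (by norm_num) (by norm_num) (by norm_num) (by norm_num))
          (class_finite hn 2 1 (k-1) (by norm_num) (by norm_num) (by norm_num) (by norm_num)),
        class_ncard hn 1 2 (k-1) (by norm_num) (by norm_num) (by norm_num) (by norm_num),
        class_ncard hn 2 1 (k-1) (by norm_num) (by norm_num) (by norm_num) (by norm_num),
        show n + (k-1) = n + k - 1 by omega, two_mul]
end
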